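/- The cross-product relation is transitive on nonzero admissible vectors: if v, w, u are nonzero admissible vectors in ℕ^ℕ with v ≼ w and w ≼ u, then v ≼ u, where v ≼ w means v(i)·w(j) ≥ v(j)·w(i) for all i ≤ j. -/

import Mathlib

/-- A vector `v : ℕ → ℕ` is admissible if it has finite (bounded) support and its
support is an interval. -/
def Admissible (v : ℕ → ℕ) : Prop :=
  {i | v i ≠ 0}.Finite ∧
  ∀ i j k : ℕ, i ≤ j → j ≤ k → v i ≠ 0 → v k ≠ 0 → v j ≠ 0

/-- The cross–product relation `v ≼ w`: `v(i)·w(j) ≥ v(j)·w(i)` for all `i ≤ j`. -/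
def CPRel (v w : ℕ → ℕ) : Prop := ∀ i j : ℕ, i ≤ j → v j * w i ≤ v i * w j

/-- The cross-product relation is transitive on nonzero admissible vectors. -/
theorem cprel_trans (v w u : ℕ → ℕ)
    (hv : Admissible v) (hw : Admissible w) (hu : Admissible u)
    (hv0 : v ≠ 0) (hw0 : w ≠ 0) (hu0 : u ≠ 0)
    (hvw : CPRel v w) (hwu : CPRel w u) : CPRel v u := by
  -- w has nonempty finite support
  have hwex : ∃ k, w k ≠ 0 := by
    by_contra h
    push_neg at h
    exact hw0 (funext fun k => h k)
  -- minimum of support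
  set m := Nat.find hwex with hmdef
  have hm : w m ≠ 0 := Nat.find_spec hwex
  have hmmin : ∀ i, w i ≠ 0 → m ≤ i := fun i hi => Nat.find_le hi
  -- maximum of support
  obtain ⟨M, hM, hMmax⟩ := Set.Finite.exists_maximalFor id _ hw.1
    (by obtain ⟨k, hk⟩ := hwex; exact ⟨k, hk⟩)
  intro i j hij
  by_cases hui : u i = 0
  · simp [hui]
  by_cases hvj : v j = 0
  · simp [hvj]
  -- i ≥ m : else w i = 0 and hwu i m gives w m * u i ≤ 0
  have hmi : m ≤ i := by
    by_contra h
    push_neg at h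
    have hwi : w i = 0 := by
      by_contra hwi
      exact absurd (hmmin i hwi) (by omega)
    have := hwu i m h.le
    rw [hwi, Nat.zero_mul] at this
    rcases Nat.mul_eq_zero.mp (Nat.le_zero.mp this) with h1 | h2
    · exact hm h1
    · exact hui h2
  -- j ≤ M : else w j = 0 and hvw M j gives v j * w M ≤ 0
  have hjM : j ≤ M := by
    by_contra h
    push_neg at h
    have hwj : w j = 0 := by
      by_contra hwj
      have := hMmax (j := j) hwj (by simpa using h.le)
      simp only [id] at this
      omega
    have := hvw M j h.le
    rw [hwj, Nat.mul_zero] at this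
    rcases Nat.mul_eq_zero.mp (Nat.le_zero.mp this) with h1 | h2
    · exact hvj h1
    · exact hM h2
  have hwi : w i ≠ 0 := hw.2 m i M hmi (le_trans hij hjM) hm hM
  have hwj : w j ≠ 0 := hw.2 m j M (le_trans hmi hij) hjM hm hM
  have h1 := hvw i j hij
  have h2 := hwu i j hij
  have hwi' : 0 < w i := Nat.pos_of_ne_zero hwi
  have hwj' : 0 < w j := Nat.pos_of_ne_zero hwj
  nlinarith [Nat.mul_le_mul h1 h2]
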